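/- arXiv:2302.12215 — 2 statements merged into one kernel-verified Lean document; each statement's English description precedes it below -/
import Mathlib

section
/- Assuming the Continuum Hypothesis, there exists a coloring f : ℝ² → ℕ such that no three points forming a right triangle (three non-collinear points x, y, z with the angle at y equal to π/2) all receive the same color. -/
open EuclideanGeometry Metric Real Set

noncomputable section

abbrev Pt := EuclideanSpace ℝ (Fin 2)

/-- A line in the plane: a one-dimensional affine subspace, given parametrically. -/
def IsLine (L : Set Pt) : Prop :=
  ∃ p v : Pt, v ≠ 0 ∧ L = {x | ∃ t : ℝ, x = p + t • v}

/-- A circle in the plane: a metric sphere of positive radius. -/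
def IsCircle (C : Set Pt) : Prop :=
  ∃ (o : Pt) (r : ℝ), 0 < r ∧ C = sphere o r

/-- The line through two points. -/
def lineThru (x y : Pt) : Set Pt := {p | ∃ t : ℝ, p = x + t • (y - x)}

/-- Perpendicular lines: parametrizations with orthogonal direction vectors. -/
def PerpLines (L L' : Set Pt) : Prop :=
  ∃ p v q w : Pt, v ≠ 0 ∧ w ≠ 0 ∧ inner ℝ v w = (0 : ℝ) ∧
    L = {x | ∃ t : ℝ, x = p + t • v} ∧ L' = {x | ∃ t : ℝ, x = q + t • w}

/-- The Continuum Hypothesis. -/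
def CH : Prop := Cardinal.continuum.{0} = Cardinal.aleph.{0} 1

open Cardinal Ordinal



/-- A subfield of ℝ closed under square roots (of nonnegative reals). -/
def GoodF (F : Set ℝ) : Prop :=
  (0 : ℝ) ∈ F ∧ (1 : ℝ) ∈ F ∧
  (∀ x ∈ F, ∀ y ∈ F, x + y ∈ F) ∧
  (∀ x ∈ F, ∀ y ∈ F, x * y ∈ F) ∧
  (∀ x ∈ F, -x ∈ F) ∧
  (∀ x ∈ F, x⁻¹ ∈ F) ∧
  (∀ x ∈ F, Real.sqrt x ∈ F)

namespace GoodF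

variable {F : Set ℝ} (hF : GoodF F)
include hF

theorem zero : (0:ℝ) ∈ F := hF.1
theorem one : (1:ℝ) ∈ F := hF.2.1
theorem add {x y : ℝ} (hx : x ∈ F) (hy : y ∈ F) : x + y ∈ F := hF.2.2.1 x hx y hy
theorem mul {x y : ℝ} (hx : x ∈ F) (hy : y ∈ F) : x * y ∈ F := hF.2.2.2.1 x hx y hy
theorem neg {x : ℝ} (hx : x ∈ F) : -x ∈ F := hF.2.2.2.2.1 x hx
theorem inv {x : ℝ} (hx : x ∈ F) : x⁻¹ ∈ F := hF.2.2.2.2.2.1 x hx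
theorem sqrt {x : ℝ} (hx : x ∈ F) : Real.sqrt x ∈ F := hF.2.2.2.2.2.2 x hx
theorem sub {x y : ℝ} (hx : x ∈ F) (hy : y ∈ F) : x - y ∈ F := by
  rw [sub_eq_add_neg]; exact hF.add hx (hF.neg hy)
theorem div {x y : ℝ} (hx : x ∈ F) (hy : y ∈ F) : x / y ∈ F := by
  rw [div_eq_mul_inv]; exact hF.mul hx (hF.inv hy)
theorem two : (2:ℝ) ∈ F := by
  have := hF.add hF.one hF.one; norm_num at this; exact this
theorem abs {x : ℝ} (hx : x ∈ F) : |x| ∈ F := by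
  have := hF.sqrt (hF.mul hx hx)
  rwa [← Real.sqrt_sq_eq_abs, sq]
theorem sq' {x : ℝ} (hx : x ∈ F) : x^2 ∈ F := by
  rw [sq]; exact hF.mul hx hx

end GoodF

/-- one step of closure -/
def genStep (S : Set ℝ) : Set ℝ :=
  S ∪ image2 (· + ·) S S ∪ image2 (· * ·) S S ∪ (Neg.neg '' S) ∪ (Inv.inv '' S)
    ∪ (Real.sqrt '' S)

def genIter (S : Set ℝ) : ℕ → Set ℝ
  | 0 => S ∪ {0, 1}
  | n + 1 => genStep (genIter S n)

/-- The good-field closure of a set of reals. -/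
def genCl (S : Set ℝ) : Set ℝ := ⋃ n, genIter S n

theorem subset_genStep {S : Set ℝ} : S ⊆ genStep S := by
  intro x hx; exact Or.inl (Or.inl (Or.inl (Or.inl (Or.inl hx))))

theorem genIter_mono_step {S : Set ℝ} (n : ℕ) : genIter S n ⊆ genIter S (n+1) :=
  subset_genStep

theorem genIter_mono {S : Set ℝ} {m n : ℕ} (h : m ≤ n) : genIter S m ⊆ genIter S n := by
  induction n with
  | zero => simp_all
  | succ n ih =>
    rcases Nat.lt_or_ge m (n+1) with h' | h'
    · exact (ih (Nat.lt_succ_iff.mp h')).trans (genIter_mono_step n)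
    · have : m = n + 1 := le_antisymm h h'
      subst this; rfl

theorem subset_genCl {S : Set ℝ} : S ⊆ genCl S := by
  intro x hx
  exact mem_iUnion.mpr ⟨0, Or.inl hx⟩

theorem genCl_good (S : Set ℝ) : GoodF (genCl S) := by
  have hmem : ∀ {x : ℝ} {n : ℕ}, x ∈ genIter S n → x ∈ genCl S :=
    fun {x n} h => mem_iUnion.mpr ⟨n, h⟩
  have hup : ∀ {x y : ℝ}, x ∈ genCl S → y ∈ genCl S →
      ∃ n, x ∈ genIter S n ∧ y ∈ genIter S n := by
    intro x y hx hy
    obtain ⟨m, hm⟩ := mem_iUnion.mp hx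
    obtain ⟨n, hn⟩ := mem_iUnion.mp hy
    exact ⟨max m n, genIter_mono (le_max_left m n) hm, genIter_mono (le_max_right m n) hn⟩
  refine ⟨hmem (n := 0) (by simp [genIter]), hmem (n := 0) (by simp [genIter]), ?_, ?_, ?_, ?_, ?_⟩
  · intro x hx y hy
    obtain ⟨n, hxn, hyn⟩ := hup hx hy
    exact hmem (n := n+1) (Or.inl (Or.inl (Or.inl (Or.inl (Or.inr ⟨x, hxn, y, hyn, rfl⟩)))))
  · intro x hx y hy
    obtain ⟨n, hxn, hyn⟩ := hup hx hy
    exact hmem (n := n+1) (Or.inl (Or.inl (Or.inl (Or.inr ⟨x, hxn, y, hyn, rfl⟩))))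
  · intro x hx
    obtain ⟨n, hn⟩ := mem_iUnion.mp hx
    exact hmem (n := n+1) (Or.inl (Or.inl (Or.inr ⟨x, hn, rfl⟩)))
  · intro x hx
    obtain ⟨n, hn⟩ := mem_iUnion.mp hx
    exact hmem (n := n+1) (Or.inl (Or.inr ⟨x, hn, rfl⟩))
  · intro x hx
    obtain ⟨n, hn⟩ := mem_iUnion.mp hx
    exact hmem (n := n+1) (Or.inr ⟨x, hn, rfl⟩)

theorem genCl_countable {S : Set ℝ} (hS : S.Countable) : (genCl S).Countable := by
  have : ∀ n, (genIter S n).Countable := by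
    intro n
    induction n with
    | zero => exact hS.union (by simp)
    | succ n ih =>
      exact ((((ih.union (ih.image2 ih _)).union (ih.image2 ih _)).union (ih.image _)).union
        (ih.image _)).union (ih.image _)
  exact countable_iUnion this

theorem genCl_mono {S T : Set ℝ} (h : S ⊆ T) : genCl S ⊆ genCl T := by
  have : ∀ n, genIter S n ⊆ genIter T n := by
    intro n
    induction n with
    | zero => exact union_subset_union_left _ h
    | succ n ih =>
      intro x hx
      rcases hx with ((((h'|h')|h')|h')|h') | h'
      · exact Or.inl (Or.inl (Or.inl (Or.inl (Or.inl (ih h')))))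
      · obtain ⟨a, ha, b, hb, rfl⟩ := h'
        exact Or.inl (Or.inl (Or.inl (Or.inl (Or.inr ⟨a, ih ha, b, ih hb, rfl⟩))))
      · obtain ⟨a, ha, b, hb, rfl⟩ := h'
        exact Or.inl (Or.inl (Or.inl (Or.inr ⟨a, ih ha, b, ih hb, rfl⟩)))
      · obtain ⟨a, ha, rfl⟩ := h'
        exact Or.inl (Or.inl (Or.inr ⟨a, ih ha, rfl⟩))
      · obtain ⟨a, ha, rfl⟩ := h'
        exact Or.inl (Or.inr ⟨a, ih ha, rfl⟩)
      · obtain ⟨a, ha, rfl⟩ := h'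
        exact Or.inr ⟨a, ih ha, rfl⟩
  intro x hx
  obtain ⟨n, hn⟩ := mem_iUnion.mp hx
  exact mem_iUnion.mpr ⟨n, this n hn⟩

def mkPt (x y : ℝ) : Pt := !₂[x, y]

@[simp] theorem mkPt_zero (x y : ℝ) : mkPt x y 0 = x := rfl
@[simp] theorem mkPt_one (x y : ℝ) : mkPt x y 1 = y := rfl

theorem Pt.ext' {p q : Pt} (h0 : p 0 = q 0) (h1 : p 1 = q 1) : p = q := by
  ext i; fin_cases i <;> assumption

/-- The line `a x + b y = c`. -/
def lineS (a b c : ℝ) : Set Pt := {w | a * w 0 + b * w 1 = c}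

/-- The circle centered at `(u,v)` with squared radius `s`. -/
def circleS (u v s : ℝ) : Set Pt := {w | (w 0 - u)^2 + (w 1 - v)^2 = s}

theorem mem_lineS {a b c : ℝ} {w : Pt} : w ∈ lineS a b c ↔ a * w 0 + b * w 1 = c := Iff.rfl
theorem mem_circleS {u v s : ℝ} {w : Pt} :
    w ∈ circleS u v s ↔ (w 0 - u)^2 + (w 1 - v)^2 = s := Iff.rfl

/-- A line or circle whose (suitable) defining parameters lie in `F`. -/
def CurveOver (F : Set ℝ) (C : Set Pt) : Prop :=
  (∃ a b c : ℝ, (a ≠ 0 ∨ b ≠ 0) ∧ a ∈ F ∧ b ∈ F ∧ c ∈ F ∧ C = lineS a b c) ∨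
  (∃ u v s : ℝ, 0 < s ∧ u ∈ F ∧ v ∈ F ∧ s ∈ F ∧ C = circleS u v s)

theorem CurveOver.mono {F G : Set ℝ} {C : Set Pt} (h : CurveOver F C) (hFG : F ⊆ G) :
    CurveOver G C := by
  rcases h with ⟨a, b, c, hab, ha, hb, hc, rfl⟩ | ⟨u, v, s, hs, hu, hv, hs', rfl⟩
  · exact Or.inl ⟨a, b, c, hab, hFG ha, hFG hb, hFG hc, rfl⟩
  · exact Or.inr ⟨u, v, s, hs, hFG hu, hFG hv, hFG hs', rfl⟩

/-- A real root of a quadratic with coefficients in a good field lies in the field. -/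
theorem quadRoot {F : Set ℝ} (hF : GoodF F) {A B C x : ℝ} (hA : A ≠ 0)
    (hAF : A ∈ F) (hBF : B ∈ F) (hCF : C ∈ F) (hx : A * x^2 + B * x + C = 0) : x ∈ F := by
  set D := 2 * A * x + B with hD
  have hD2 : D ^ 2 = B ^ 2 - 4 * A * C := by
    rw [hD]; linear_combination (4 * A) * hx
  have habs : |D| ∈ F := by
    have h4 : (4:ℝ) ∈ F := by
      have := hF.mul hF.two hF.two; norm_num at this; exact this
    have h1 : B ^ 2 - 4 * A * C ∈ F :=
      hF.sub (hF.sq' hBF) (hF.mul (hF.mul h4 hAF) hCF)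
    have h2 := hF.sqrt h1
    rwa [← hD2, Real.sqrt_sq_eq_abs] at h2
  have h2A : (2 : ℝ) * A ∈ F := hF.mul hF.two hAF
  have hfin : ∀ d : ℝ, d ∈ F → D = d → x ∈ F := by
    intro d hd hDd
    have h2A' : (2:ℝ) * A ≠ 0 := mul_ne_zero two_ne_zero hA
    have : x = (d - B) / (2 * A) := by
      rw [eq_div_iff h2A', ← hDd, hD]; ring
    rw [this]; exact hF.div (hF.sub hd hBF) h2A
  rcases abs_choice D with h | h
  · exact hfin |D| habs h.symm
  · exact hfin (-|D|) (hF.neg habs) (by linarith)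

/-- Cramer: any solution of a 2×2 linear system with nonzero determinant is given
by the explicit formulas. -/
theorem solve2 {m11 m12 m21 m22 e1 e2 u v : ℝ} (hdet : m11 * m22 - m21 * m12 ≠ 0)
    (h1 : m11 * u + m12 * v = e1) (h2 : m21 * u + m22 * v = e2) :
    u = (e1 * m22 - e2 * m12) / (m11 * m22 - m21 * m12) ∧
    v = (m11 * e2 - m21 * e1) / (m11 * m22 - m21 * m12) := by
  constructor
  · rw [eq_div_iff hdet]; linear_combination m22 * h1 - m12 * h2
  · rw [eq_div_iff hdet]; linear_combination m11 * h2 - m21 * h1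

/-- Two lines with proportional normals sharing a point are equal. -/
theorem lineS_eq_of_det_zero {a b c a' b' c' : ℝ} (hab : a ≠ 0 ∨ b ≠ 0)
    (hab' : a' ≠ 0 ∨ b' ≠ 0) (hdet : a * b' - a' * b = 0) {p : Pt}
    (hp : p ∈ lineS a b c) (hp' : p ∈ lineS a' b' c') : lineS a b c = lineS a' b' c' := by
  simp only [mem_lineS] at hp hp'
  ext w
  simp only [mem_lineS]
  constructor
  · intro hw
    have hXY : a * (w 0 - p 0) + b * (w 1 - p 1) = 0 := by linear_combination hw - hp
    have key : a' * (w 0 - p 0) + b' * (w 1 - p 1) = 0 := by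
      rcases hab with ha | hb
      · have h : a * (a' * (w 0 - p 0) + b' * (w 1 - p 1)) = 0 := by
          linear_combination a' * hXY + (w 1 - p 1) * hdet
        exact (mul_eq_zero.mp h).resolve_left ha
      · have h : b * (a' * (w 0 - p 0) + b' * (w 1 - p 1)) = 0 := by
          linear_combination b' * hXY - (w 0 - p 0) * hdet
        exact (mul_eq_zero.mp h).resolve_left hb
    linear_combination key + hp'
  · intro hw
    have hXY : a' * (w 0 - p 0) + b' * (w 1 - p 1) = 0 := by linear_combination hw - hp'
    have key : a * (w 0 - p 0) + b * (w 1 - p 1) = 0 := by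
      rcases hab' with ha | hb
      · have h : a' * (a * (w 0 - p 0) + b * (w 1 - p 1)) = 0 := by
          linear_combination a * hXY - (w 1 - p 1) * hdet
        exact (mul_eq_zero.mp h).resolve_left ha
      · have h : b' * (a * (w 0 - p 0) + b * (w 1 - p 1)) = 0 := by
          linear_combination b * hXY + (w 0 - p 0) * hdet
        exact (mul_eq_zero.mp h).resolve_left hb
    linear_combination key + hp

/-- A common point of a line and a circle with parameters in a good field has
coordinates in the field. -/
theorem LC_mem {F : Set ℝ} (hF : GoodF F) {a b c u v s : ℝ} (hab : a ≠ 0 ∨ b ≠ 0)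
    (ha : a ∈ F) (hb : b ∈ F) (hc : c ∈ F) (hu : u ∈ F) (hv : v ∈ F) (hs : s ∈ F)
    {p : Pt} (hpl : p ∈ lineS a b c) (hpc : p ∈ circleS u v s) :
    p 0 ∈ F ∧ p 1 ∈ F := by
  rw [mem_lineS] at hpl; rw [mem_circleS] at hpc
  by_cases hbz : b = 0
  · have haz : a ≠ 0 := hab.resolve_right (by simp [hbz])
    have hx : p 0 = c / a := by
      rw [eq_div_iff haz]; rw [hbz] at hpl; linarith
    have hxF : p 0 ∈ F := hx ▸ hF.div hc ha
    have hy : 1 * (p 1)^2 + (-(2*v)) * (p 1) + ((p 0 - u)^2 + v^2 - s) = 0 := by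
      linear_combination hpc
    have hyF : p 1 ∈ F := quadRoot hF one_ne_zero hF.one
      (hF.neg (hF.mul hF.two hv))
      (hF.sub (hF.add (hF.sq' (hF.sub hxF hu)) (hF.sq' hv)) hs) hy
    exact ⟨hxF, hyF⟩
  · have hx : (b^2 + a^2) * (p 0)^2 + (-(2*u*b^2) - 2*a*(c - b*v)) * (p 0)
        + (b^2*u^2 + (c - b*v)^2 - s*b^2) = 0 := by
      have hy : p 1 = (c - a * p 0) / b := by rw [eq_div_iff hbz]; linarith
      have h2 : (p 0 - u)^2 * b^2 + ((c - a * p 0)/b * b - v*b)^2 = s * b^2 := by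
        rw [div_mul_cancel₀ _ hbz]
        have : ((c - a * p 0) - v * b) = (p 1 - v) * b := by rw [hy]; field_simp
        rw [this]
        linear_combination b^2 * hpc
      rw [div_mul_cancel₀ _ hbz] at h2
      linear_combination h2
    have hA : b^2 + a^2 ≠ 0 := by positivity
    have hb2 : b^2 ∈ F := hF.sq' hb
    have hxF : p 0 ∈ F := quadRoot hF hA (hF.add hb2 (hF.sq' ha))
      (hF.sub (hF.neg (hF.mul (hF.mul hF.two hu) hb2))
        (hF.mul (hF.mul hF.two ha) (hF.sub hc (hF.mul hb hv))))
      (hF.sub (hF.add (hF.mul hb2 (hF.sq' hu)) (hF.sq' (hF.sub hc (hF.mul hb hv))))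
        (hF.mul hs hb2)) hx
    have hyF : p 1 ∈ F := by
      have hy : p 1 = (c - a * p 0) / b := by rw [eq_div_iff hbz]; linarith
      rw [hy]; exact hF.div (hF.sub hc (hF.mul ha hxF)) hb
    exact ⟨hxF, hyF⟩

/-- A nonzero quadratic cannot have three distinct roots. -/
theorem quad_three {A B C x1 x2 x3 : ℝ} (hA : A ≠ 0)
    (h1 : A * x1^2 + B * x1 + C = 0) (h2 : A * x2^2 + B * x2 + C = 0)
    (h3 : A * x3^2 + B * x3 + C = 0) (h12 : x1 ≠ x2) (h13 : x1 ≠ x3) (h23 : x2 ≠ x3) :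
    False := by
  have e12 : (x1 - x2) * (A * (x1 + x2) + B) = 0 := by linear_combination h1 - h2
  have e13 : (x1 - x3) * (A * (x1 + x3) + B) = 0 := by linear_combination h1 - h3
  have f12 : A * (x1 + x2) + B = 0 :=
    (mul_eq_zero.mp e12).resolve_left (sub_ne_zero.mpr h12)
  have f13 : A * (x1 + x3) + B = 0 :=
    (mul_eq_zero.mp e13).resolve_left (sub_ne_zero.mpr h13)
  have : A * (x2 - x3) = 0 := by linear_combination f12 - f13
  exact h23 (by have := (mul_eq_zero.mp this).resolve_left hA; linarith)

/-- A line and a circle share at most two points. -/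
theorem LC_two {a b c u v s : ℝ} (hab : a ≠ 0 ∨ b ≠ 0) {p q r : Pt}
    (hp : p ∈ lineS a b c) (hp' : p ∈ circleS u v s)
    (hq : q ∈ lineS a b c) (hq' : q ∈ circleS u v s)
    (hr : r ∈ lineS a b c) (hr' : r ∈ circleS u v s)
    (hpq : p ≠ q) (hpr : p ≠ r) (hqr : q ≠ r) : False := by
  rw [mem_lineS] at hp hq hr; rw [mem_circleS] at hp' hq' hr'
  by_cases hbz : b = 0
  · have haz : a ≠ 0 := hab.resolve_right (by simp [hbz])
    rw [hbz] at hp hq hr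
    have hx : ∀ w : Pt, a * w 0 + 0 * w 1 = c → w 0 = c / a := by
      intro w hw; rw [eq_div_iff haz]; linarith
    have key : ∀ w : Pt, a * w 0 + 0 * w 1 = c → (w 0 - u)^2 + (w 1 - v)^2 = s →
        1 * (w 1)^2 + (-(2*v)) * (w 1) + ((c/a - u)^2 + v^2 - s) = 0 := by
      intro w hw hw'
      have := hx w hw
      rw [← this]
      linear_combination hw'
    have hne : ∀ (w w' : Pt), a * w 0 + 0 * w 1 = c → a * w' 0 + 0 * w' 1 = c →
        w ≠ w' → w 1 ≠ w' 1 := by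
      intro w w' hw hw' hne heq
      exact hne (Pt.ext' (by rw [hx w hw, hx w' hw']) heq)
    exact quad_three one_ne_zero (key p hp hp') (key q hq hq') (key r hr hr')
      (hne p q hp hq hpq) (hne p r hp hr hpr) (hne q r hq hr hqr)
  · have key : ∀ w : Pt, a * w 0 + b * w 1 = c → (w 0 - u)^2 + (w 1 - v)^2 = s →
        (b^2 + a^2) * (w 0)^2 + (-(2*u*b^2) - 2*a*(c - b*v)) * (w 0)
        + (b^2*u^2 + (c - b*v)^2 - s*b^2) = 0 := by
      intro w hw hw'
      have hy : w 1 * b = (c - a * w 0) := by linarith [mul_comm (w 1) b]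
      have h2 : (w 0 - u)^2 * b^2 + ((c - a * w 0) - v*b)^2 = s * b^2 := by
        rw [← hy]
        linear_combination b^2 * hw'
      linear_combination h2
    have hA : b^2 + a^2 ≠ 0 := by positivity
    have hne : ∀ (w w' : Pt), a * w 0 + b * w 1 = c → a * w' 0 + b * w' 1 = c →
        w ≠ w' → w 0 ≠ w' 0 := by
      intro w w' hw hw' hne heq
      refine hne (Pt.ext' heq ?_)
      have : b * w 1 = b * w' 1 := by rw [heq] at hw; linarith
      exact mul_left_cancel₀ hbz this
    exact quad_three hA (key p hp hp') (key q hq hq') (key r hr hr')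
      (hne p q hp hq hpq) (hne p r hp hr hpr) (hne q r hq hr hqr)

/-- Distinct curves over a good field meet only in points with coordinates in the field. -/
theorem curve_unique {F : Set ℝ} (hF : GoodF F) {C₁ C₂ : Set Pt}
    (h1 : CurveOver F C₁) (h2 : CurveOver F C₂) (hne : C₁ ≠ C₂) {p : Pt}
    (hp1 : p ∈ C₁) (hp2 : p ∈ C₂) : p 0 ∈ F ∧ p 1 ∈ F := by
  rcases h1 with ⟨a, b, c, hab, ha, hb, hc, rfl⟩ | ⟨u, v, s, hs, hu, hv, hsF, rfl⟩
  · rcases h2 with ⟨a', b', c', hab', ha', hb', hc', rfl⟩ | ⟨u, v, s, hs, hu, hv, hsF, rfl⟩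
    · -- line/line
      by_cases hdet : a * b' - a' * b = 0
      · exact absurd (lineS_eq_of_det_zero hab hab' hdet hp1 hp2) hne
      · have h1' := mem_lineS.mp hp1
        have h2' := mem_lineS.mp hp2
        have := solve2 (m11 := a) (m12 := b) (m21 := a') (m22 := b')
          (by rwa [show a * b' - a' * b = a * b' - a' * b from rfl] at hdet) h1' h2'
        obtain ⟨hx, hy⟩ := this
        have hdetF : a * b' - a' * b ∈ F := hF.sub (hF.mul ha hb') (hF.mul ha' hb)
        constructor
        · rw [hx]; exact hF.div (hF.sub (hF.mul hc hb') (hF.mul hc' hb)) hdetF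
        · rw [hy]; exact hF.div (hF.sub (hF.mul ha hc') (hF.mul ha' hc)) hdetF
    · exact LC_mem hF hab ha hb hc hu hv hsF hp1 hp2
  · rcases h2 with ⟨a', b', c', hab', ha', hb', hc', rfl⟩ | ⟨u', v', s', hs', hu', hv', hsF', rfl⟩
    · exact LC_mem hF hab' ha' hb' hc' hu hv hsF hp2 hp1
    · -- circle/circle
      have hp1' := mem_circleS.mp hp1
      have hp2' := mem_circleS.mp hp2
      by_cases hcen : u = u' ∧ v = v'
      · obtain ⟨rfl, rfl⟩ := hcen
        have : s = s' := by linarith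
        subst this
        exact absurd rfl hne
      · have hab0 : 2*(u'-u) ≠ 0 ∨ 2*(v'-v) ≠ 0 := by
          rcases not_and_or.mp hcen with h | h
          · left; intro h'; apply h; linarith
          · right; intro h'; apply h; linarith
        have hline : p ∈ lineS (2*(u'-u)) (2*(v'-v)) (s - s' + u'^2 + v'^2 - u^2 - v^2) := by
          rw [mem_lineS]; linear_combination hp1' - hp2'
        exact LC_mem hF hab0
          (hF.mul hF.two (hF.sub hu' hu)) (hF.mul hF.two (hF.sub hv' hv))
          (hF.sub (hF.sub (hF.add (hF.add (hF.sub hsF hsF') (hF.sq' hu')) (hF.sq' hv'))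
            (hF.sq' hu)) (hF.sq' hv))
          hu hv hsF hline hp1

/-- The parameters of a (positive-radius) circle are determined by the circle as a set. -/
theorem circleS_param_unique {u v s u' v' s' : ℝ} (hs : 0 < s)
    (h : circleS u v s = circleS u' v' s') : u = u' ∧ v = v' ∧ s = s' := by
  have hsqrt : Real.sqrt s ^ 2 = s := Real.sq_sqrt hs.le
  have ht : Real.sqrt s ≠ 0 := by positivity
  have m1 : mkPt (u + Real.sqrt s) v ∈ circleS u v s := by rw [mem_circleS]; simp; exact hsqrt
  have m2 : mkPt (u - Real.sqrt s) v ∈ circleS u v s := by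
    rw [mem_circleS]; simp; linear_combination hsqrt
  have m3 : mkPt u (v + Real.sqrt s) ∈ circleS u v s := by
    rw [mem_circleS]; simp; exact hsqrt
  have m4 : mkPt u (v - Real.sqrt s) ∈ circleS u v s := by
    rw [mem_circleS]; simp; linear_combination hsqrt
  rw [h] at m1 m2 m3 m4
  rw [mem_circleS] at m1 m2 m3 m4
  simp at m1 m2 m3 m4
  have hu : u = u' := by
    have : 4 * Real.sqrt s * (u - u') = 0 := by linear_combination m1 - m2
    have := mul_eq_zero.mp this
    rcases this with h' | h'
    · exact absurd h' (by positivity)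
    · linarith
  have hv : v = v' := by
    have : 4 * Real.sqrt s * (v - v') = 0 := by linear_combination m3 - m4
    rcases mul_eq_zero.mp this with h' | h'
    · exact absurd h' (by positivity)
    · linarith
  subst hu; subst hv
  refine ⟨rfl, rfl, ?_⟩
  linear_combination m1 - hsqrt

/-- Two vectors orthogonal to the same nonzero vector are parallel. -/
theorem perp_parallel {X Y a b a' b' : ℝ} (hXY : X ≠ 0 ∨ Y ≠ 0)
    (h1 : a * X + b * Y = 0) (h2 : a' * X + b' * Y = 0) : a * b' - a' * b = 0 := by
  rcases hXY with hX | hY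
  · have : X * (a * b' - a' * b) = 0 := by linear_combination b' * h1 - b * h2
    exact (mul_eq_zero.mp this).resolve_left hX
  · have : Y * (a * b' - a' * b) = 0 := by linear_combination a * h2 - a' * h1
    exact (mul_eq_zero.mp this).resolve_left hY

/-- Three distinct points with coordinates in a good field lying on a line or circle
force the curve to be definable over the field. -/
theorem three_point_curve {F : Set ℝ} (hF : GoodF F) {C : Set Pt}
    (hC : CurveOver (univ : Set ℝ) C) {e1 e2 e3 : Pt}
    (h12 : e1 ≠ e2) (h13 : e1 ≠ e3) (h23 : e2 ≠ e3)
    (he1 : e1 ∈ C) (he2 : e2 ∈ C) (he3 : e3 ∈ C)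
    (hc1 : e1 0 ∈ F ∧ e1 1 ∈ F) (hc2 : e2 0 ∈ F ∧ e2 1 ∈ F)
    (hc3 : e3 0 ∈ F ∧ e3 1 ∈ F) : CurveOver F C := by
  rcases hC with ⟨a, b, c, hab, -, -, -, rfl⟩ | ⟨u, v, s, hs, -, -, -, rfl⟩
  · -- line
    set a' := e1 1 - e2 1 with ha'
    set b' := e2 0 - e1 0 with hb'
    have hab' : a' ≠ 0 ∨ b' ≠ 0 := by
      by_contra h
      push_neg at h
      exact h12 (Pt.ext' (by have := h.2; rw [hb'] at this; linarith)
        (by have := h.1; rw [ha'] at this; linarith))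
    have hm1 : e1 ∈ lineS a' b' (a' * e1 0 + b' * e1 1) := by rw [mem_lineS]
    have hX : a * (e2 0 - e1 0) + b * (e2 1 - e1 1) = 0 := by
      have g1 := mem_lineS.mp he1; have g2 := mem_lineS.mp he2; linear_combination g2 - g1
    have hX' : a' * (e2 0 - e1 0) + b' * (e2 1 - e1 1) = 0 := by rw [ha', hb']; ring
    have hXY : e2 0 - e1 0 ≠ 0 ∨ e2 1 - e1 1 ≠ 0 := by
      by_contra h
      push_neg at h
      exact h12 (Pt.ext' (by linarith [h.1]) (by linarith [h.2]))
    have hdet : a * b' - a' * b = 0 := perp_parallel hXY hX hX'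
    have heq : lineS a b c = lineS a' b' (a' * e1 0 + b' * e1 1) :=
      lineS_eq_of_det_zero hab hab' hdet he1 hm1
    rw [heq]
    exact Or.inl ⟨a', b', a' * e1 0 + b' * e1 1, hab',
      hF.sub hc1.2 hc2.2, hF.sub hc2.1 hc1.1,
      hF.add (hF.mul (hF.sub hc1.2 hc2.2) hc1.1) (hF.mul (hF.sub hc2.1 hc1.1) hc1.2), rfl⟩
  · -- circle
    set X2 := e2 0 - e1 0 with hX2
    set Y2 := e2 1 - e1 1 with hY2
    set X3 := e3 0 - e1 0 with hX3
    set Y3 := e3 1 - e1 1 with hY3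
    have hcross : X2 * Y3 - X3 * Y2 ≠ 0 := by
      intro hzero
      -- the three points would be collinear, contradicting LC_two
      have hab0 : (e1 1 - e2 1) ≠ 0 ∨ (e2 0 - e1 0) ≠ 0 := by
        by_contra h
        push_neg at h
        exact h12 (Pt.ext' (by linarith [h.2]) (by linarith [h.1]))
      have l1 : e1 ∈ lineS (e1 1 - e2 1) (e2 0 - e1 0) ((e1 1 - e2 1) * e1 0 + (e2 0 - e1 0) * e1 1) := by
        rw [mem_lineS]
      have l2 : e2 ∈ lineS (e1 1 - e2 1) (e2 0 - e1 0) ((e1 1 - e2 1) * e1 0 + (e2 0 - e1 0) * e1 1) := by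
        rw [mem_lineS]; ring
      have l3 : e3 ∈ lineS (e1 1 - e2 1) (e2 0 - e1 0) ((e1 1 - e2 1) * e1 0 + (e2 0 - e1 0) * e1 1) := by
        rw [mem_lineS]
        rw [hX2, hY2, hX3, hY3] at hzero
        linear_combination hzero
      exact LC_two hab0 l1 he1 l2 he2 l3 he3 h12 h13 h23
    have g1 := mem_circleS.mp he1
    have g2 := mem_circleS.mp he2
    have g3 := mem_circleS.mp he3
    have eq2 : (2*X2) * u + (2*Y2) * v = e2 0^2 + e2 1^2 - e1 0^2 - e1 1^2 := by
      rw [hX2, hY2]; linear_combination g1 - g2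
    have eq3 : (2*X3) * u + (2*Y3) * v = e3 0^2 + e3 1^2 - e1 0^2 - e1 1^2 := by
      rw [hX3, hY3]; linear_combination g1 - g3
    have hdet : (2*X2) * (2*Y3) - (2*X3) * (2*Y2) ≠ 0 := by
      intro h; apply hcross; linarith
    obtain ⟨hu, hv⟩ := solve2 hdet eq2 eq3
    have hX2F : X2 ∈ F := hF.sub hc2.1 hc1.1
    have hY2F : Y2 ∈ F := hF.sub hc2.2 hc1.2
    have hX3F : X3 ∈ F := hF.sub hc3.1 hc1.1
    have hY3F : Y3 ∈ F := hF.sub hc3.2 hc1.2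
    have hr2F : e2 0^2 + e2 1^2 - e1 0^2 - e1 1^2 ∈ F :=
      hF.sub (hF.sub (hF.add (hF.sq' hc2.1) (hF.sq' hc2.2)) (hF.sq' hc1.1)) (hF.sq' hc1.2)
    have hr3F : e3 0^2 + e3 1^2 - e1 0^2 - e1 1^2 ∈ F :=
      hF.sub (hF.sub (hF.add (hF.sq' hc3.1) (hF.sq' hc3.2)) (hF.sq' hc1.1)) (hF.sq' hc1.2)
    have hdetF : (2*X2) * (2*Y3) - (2*X3) * (2*Y2) ∈ F :=
      hF.sub (hF.mul (hF.mul hF.two hX2F) (hF.mul hF.two hY3F))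
        (hF.mul (hF.mul hF.two hX3F) (hF.mul hF.two hY2F))
    have huF : u ∈ F := by
      rw [hu]
      exact hF.div (hF.sub (hF.mul hr2F (hF.mul hF.two hY3F)) (hF.mul hr3F (hF.mul hF.two hY2F))) hdetF
    have hvF : v ∈ F := by
      rw [hv]
      exact hF.div (hF.sub (hF.mul (hF.mul hF.two hX2F) hr3F) (hF.mul (hF.mul hF.two hX3F) hr2F)) hdetF
    have hsF : s ∈ F := by
      rw [← g1]
      exact hF.add (hF.sq' (hF.sub hc1.1 huF)) (hF.sq' (hF.sub hc1.2 hvF))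
    exact Or.inr ⟨u, v, s, hs, huF, hvF, hsF, rfl⟩


abbrev W : Type := (Cardinal.aleph 1).ord.ToType

instance : IsWellOrder W (· < ·) := ⟨⟩

theorem W_Iio_countable (γ : W) : {δ : W | δ < γ}.Countable := by
  have h2 : #(Set.Iio γ) < Cardinal.aleph 1 := Cardinal.mk_Iio_ord_toType γ
  exact (Cardinal.countable_iff_lt_aleph_one _).mpr h2

theorem W_mk : #W = Cardinal.aleph 1 := by
  rw [Cardinal.mk_toType]
  exact Cardinal.card_ord _

theorem W_no_max (γ : W) : ∃ δ : W, γ < δ := by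
  by_contra h
  push_neg at h
  have huc : (Set.univ : Set W).Countable := by
    have hss : (Set.univ : Set W) ⊆ {δ : W | δ < γ} ∪ {γ} := by
      intro x _
      rcases lt_or_eq_of_le (h x) with h' | h'
      · exact Or.inl h'
      · exact Or.inr (by simp [h'])
    exact Set.Countable.mono hss ((W_Iio_countable γ).union (Set.countable_singleton _))
  have hc := (Cardinal.countable_iff_lt_aleph_one _).mp huc
  rw [Cardinal.mk_univ, W_mk] at hc
  exact absurd hc (lt_irrefl _)

namespace EK

variable (r : W → ℝ) (hr : Function.Surjective r)

/-- The increasing chain of countable good subfields of ℝ. -/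
def Fc (γ : W) : Set ℝ := genCl (r '' {ξ | ξ < γ})

theorem Fc_good (γ : W) : GoodF (Fc r γ) := genCl_good _

theorem Fc_countable (γ : W) : (Fc r γ).Countable :=
  genCl_countable ((W_Iio_countable γ).image r)

theorem Fc_mono {γ δ : W} (h : γ ≤ δ) : Fc r γ ⊆ Fc r δ :=
  genCl_mono (Set.image_mono (fun ξ hξ => lt_of_lt_of_le hξ h))

/-- points with both coordinates in `Fc γ` -/
def setF2 (γ : W) : Set Pt := {q : Pt | q 0 ∈ Fc r γ ∧ q 1 ∈ Fc r γ}

theorem setF2_countable (γ : W) : (setF2 r γ).Countable := by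
  have hinj : Function.Injective (fun q : Pt => (q 0, q 1)) := by
    intro p q h
    simp only [Prod.mk.injEq] at h
    exact Pt.ext' h.1 h.2
  have : setF2 r γ = (fun q : Pt => (q 0, q 1)) ⁻¹' ((Fc r γ) ×ˢ (Fc r γ)) := by
    ext q; simp [setF2, Set.mem_preimage]
  rw [this]
  exact Set.Countable.preimage ((Fc_countable r γ).prod (Fc_countable r γ)) hinj

theorem nIdx_exists (γ : W) : ∃ f : Pt → ℕ, Set.InjOn f (setF2 r γ) := by
  have hc : (setF2 r γ).Countable := setF2_countable r γ
  haveI := hc.to_subtype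
  obtain ⟨g, hg⟩ := exists_injective_nat (setF2 r γ)
  classical
  refine ⟨fun p => if h : p ∈ setF2 r γ then g ⟨p, h⟩ else 0, ?_⟩
  intro p hp q hq hpq
  simp only [dif_pos hp, dif_pos hq] at hpq
  exact Subtype.ext_iff.mp (hg hpq)

/-- index of a point inside its level -/
def nIdx (γ : W) : Pt → ℕ := (nIdx_exists r γ).choose

theorem nIdx_injOn (γ : W) : Set.InjOn (nIdx r γ) (setF2 r γ) :=
  (nIdx_exists r γ).choose_spec

include hr

theorem exists_Fc_mem (x : ℝ) : ∃ γ : W, x ∈ Fc r γ := by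
  obtain ⟨ξ, rfl⟩ := hr x
  obtain ⟨δ, hδ⟩ := W_no_max ξ
  exact ⟨δ, subset_genCl ⟨ξ, hδ, rfl⟩⟩

/-- the level of a point: the least `γ` with both coordinates in `Fc γ`. -/
theorem rkSet_nonempty (p : Pt) : {γ : W | p ∈ setF2 r γ}.Nonempty := by
  obtain ⟨γ₁, h1⟩ := exists_Fc_mem r hr (p 0)
  obtain ⟨γ₂, h2⟩ := exists_Fc_mem r hr (p 1)
  exact ⟨max γ₁ γ₂, Fc_mono r (le_max_left _ _) h1, Fc_mono r (le_max_right _ _) h2⟩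

def rk (p : Pt) : W :=
  WellFounded.min wellFounded_lt {γ : W | p ∈ setF2 r γ} (rkSet_nonempty r hr p)

theorem rk_mem (p : Pt) : p ∈ setF2 r (rk r hr p) :=
  WellFounded.min_mem wellFounded_lt {γ : W | p ∈ setF2 r γ} (rkSet_nonempty r hr p)

theorem rk_not_lt {p : Pt} {γ : W} (h : γ < rk r hr p) : p ∉ setF2 r γ :=
  fun hp => WellFounded.not_lt_min wellFounded_lt {γ : W | p ∈ setF2 r γ}
    hp h

theorem rk_le {p : Pt} {γ : W} (h : p ∈ setF2 r γ) : rk r hr p ≤ γ := by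
  by_contra h'
  exact rk_not_lt r hr (lt_of_not_ge h') h

/-- union of the fields strictly below the level of `p` -/
def lowF (p : Pt) : Set ℝ := ⋃ γ ∈ Set.Iio (rk r hr p), Fc r γ

theorem mem_lowF {p : Pt} {x : ℝ} : x ∈ lowF r hr p ↔ ∃ γ < rk r hr p, x ∈ Fc r γ := by
  simp [lowF]

theorem Fc_subset_lowF {p : Pt} {γ : W} (h : γ < rk r hr p) : Fc r γ ⊆ lowF r hr p :=
  fun x hx => mem_lowF r hr |>.mpr ⟨γ, h, hx⟩

theorem lowF_good {p : Pt} (hne : ∃ γ : W, γ < rk r hr p) : GoodF (lowF r hr p) := by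
  obtain ⟨γ₀, hγ₀⟩ := hne
  have up : ∀ {x y : ℝ}, x ∈ lowF r hr p → y ∈ lowF r hr p →
      ∃ γ < rk r hr p, x ∈ Fc r γ ∧ y ∈ Fc r γ := by
    intro x y hx hy
    obtain ⟨γ₁, h1, hx1⟩ := mem_lowF r hr |>.mp hx
    obtain ⟨γ₂, h2, hy2⟩ := mem_lowF r hr |>.mp hy
    exact ⟨max γ₁ γ₂, max_lt h1 h2, Fc_mono r (le_max_left _ _) hx1,
      Fc_mono r (le_max_right _ _) hy2⟩
  refine ⟨Fc_subset_lowF r hr hγ₀ (Fc_good r γ₀).zero,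
    Fc_subset_lowF r hr hγ₀ (Fc_good r γ₀).one, ?_, ?_, ?_, ?_, ?_⟩
  · intro x hx y hy
    obtain ⟨γ, hγ, hx', hy'⟩ := up hx hy
    exact Fc_subset_lowF r hr hγ ((Fc_good r γ).add hx' hy')
  · intro x hx y hy
    obtain ⟨γ, hγ, hx', hy'⟩ := up hx hy
    exact Fc_subset_lowF r hr hγ ((Fc_good r γ).mul hx' hy')
  · intro x hx
    obtain ⟨γ, hγ, hx'⟩ := mem_lowF r hr |>.mp hx
    exact Fc_subset_lowF r hr hγ ((Fc_good r γ).neg hx')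
  · intro x hx
    obtain ⟨γ, hγ, hx'⟩ := mem_lowF r hr |>.mp hx
    exact Fc_subset_lowF r hr hγ ((Fc_good r γ).inv hx')
  · intro x hx
    obtain ⟨γ, hγ, hx'⟩ := mem_lowF r hr |>.mp hx
    exact Fc_subset_lowF r hr hγ ((Fc_good r γ).sqrt hx')

theorem not_self_lowF (p : Pt) : ¬ (p 0 ∈ lowF r hr p ∧ p 1 ∈ lowF r hr p) := by
  rintro ⟨h0, h1⟩
  obtain ⟨γ₁, hγ1, hx1⟩ := mem_lowF r hr |>.mp h0
  obtain ⟨γ₂, hγ2, hx2⟩ := mem_lowF r hr |>.mp h1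
  have : p ∈ setF2 r (max γ₁ γ₂) :=
    ⟨Fc_mono r (le_max_left _ _) hx1, Fc_mono r (le_max_right _ _) hx2⟩
  exact absurd (rk_le r hr this) (not_le.mpr (max_lt hγ1 hγ2))

theorem coords_lowF {p q : Pt} (h : rk r hr q < rk r hr p) :
    q 0 ∈ lowF r hr p ∧ q 1 ∈ lowF r hr p := by
  have hm := rk_mem r hr q
  exact ⟨Fc_subset_lowF r hr h hm.1, Fc_subset_lowF r hr h hm.2⟩

theorem CurveOver_lowF_iff {p : Pt} {C : Set Pt} :
    CurveOver (lowF r hr p) C ↔ ∃ γ < rk r hr p, CurveOver (Fc r γ) C := by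
  constructor
  · rintro (⟨a, b, c, hab, ha, hb, hc, rfl⟩ | ⟨u, v, s, hs, hu, hv, hsF, rfl⟩)
    · obtain ⟨γ₁, h1, ha'⟩ := mem_lowF r hr |>.mp ha
      obtain ⟨γ₂, h2, hb'⟩ := mem_lowF r hr |>.mp hb
      obtain ⟨γ₃, h3, hc'⟩ := mem_lowF r hr |>.mp hc
      refine ⟨max (max γ₁ γ₂) γ₃, max_lt (max_lt h1 h2) h3, Or.inl ⟨a, b, c, hab, ?_, ?_, ?_, rfl⟩⟩
      · exact Fc_mono r ((le_max_left _ _).trans (le_max_left _ _)) ha'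
      · exact Fc_mono r ((le_max_right _ _).trans (le_max_left _ _)) hb'
      · exact Fc_mono r (le_max_right _ _) hc'
    · obtain ⟨γ₁, h1, hu'⟩ := mem_lowF r hr |>.mp hu
      obtain ⟨γ₂, h2, hv'⟩ := mem_lowF r hr |>.mp hv
      obtain ⟨γ₃, h3, hs'⟩ := mem_lowF r hr |>.mp hsF
      refine ⟨max (max γ₁ γ₂) γ₃, max_lt (max_lt h1 h2) h3, Or.inr ⟨u, v, s, hs, ?_, ?_, ?_, rfl⟩⟩
      · exact Fc_mono r ((le_max_left _ _).trans (le_max_left _ _)) hu'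
      · exact Fc_mono r ((le_max_right _ _).trans (le_max_left _ _)) hv'
      · exact Fc_mono r (le_max_right _ _) hs'
  · rintro ⟨γ, hγ, hC⟩
    exact hC.mono (Fc_subset_lowF r hr hγ)

def nn (p : Pt) : ℕ := nIdx r (rk r hr p) p

theorem nn_inj {p q : Pt} (hrk : rk r hr p = rk r hr q) (h : nn r hr p = nn r hr q) :
    p = q := by
  have h1 := rk_mem r hr p
  have h2 := rk_mem r hr q
  rw [hrk] at h1
  exact nIdx_injOn r (rk r hr q) h1 h2 (by rw [nn, nn, hrk] at h; exact h)

end EK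

namespace EK

variable (r : W → ℝ) (hr : Function.Surjective r)
include hr

theorem CurveOver_field_nonempty {F : Set ℝ} {C : Set Pt} (h : CurveOver F C) :
    F.Nonempty := by
  rcases h with ⟨a, b, c, _, ha, _, _, _⟩ | ⟨u, v, s, _, hu, _, _, _⟩
  exacts [⟨a, ha⟩, ⟨u, hu⟩]

theorem lowF_good_of_curve {p : Pt} {C : Set Pt} (h : CurveOver (lowF r hr p) C) :
    GoodF (lowF r hr p) := by
  obtain ⟨x, hx⟩ := CurveOver_field_nonempty r hr h
  obtain ⟨γ, hγ, -⟩ := mem_lowF r hr |>.mp hx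
  exact lowF_good r hr ⟨γ, hγ⟩

/-- `p` lies on some line or circle definable strictly below its level -/
def Spec (p : Pt) : Prop := ∃ C : Set Pt, CurveOver (lowF r hr p) C ∧ p ∈ C

open Classical in
/-- the special curve of `p` (junk value if not `Spec`) -/
def Csp (p : Pt) : Set Pt := if h : Spec r hr p then h.choose else ∅

theorem Csp_spec {p : Pt} (h : Spec r hr p) :
    CurveOver (lowF r hr p) (Csp r hr p) ∧ p ∈ Csp r hr p := by
  rw [Csp, dif_pos h]
  exact h.choose_spec

/-- uniqueness of the special curve -/
theorem Csp_eq {p : Pt} {C : Set Pt} (hC : CurveOver (lowF r hr p) C) (hp : p ∈ C) :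
    Csp r hr p = C := by
  have hs : Spec r hr p := ⟨C, hC, hp⟩
  obtain ⟨h1, h2⟩ := Csp_spec r hr hs
  by_contra hne
  have := curve_unique (lowF_good_of_curve r hr hC) h1 hC hne h2 hp
  exact not_self_lowF r hr p this

def ESet (p : Pt) : Set Pt :=
  {d | d ∈ Csp r hr p ∧ nn r hr d = nn r hr p ∧ ¬ CurveOver (lowF r hr d) (Csp r hr p) ∧
    rk r hr d < rk r hr p}

def SSet (p : Pt) : Set Pt :=
  {d | d ∈ Csp r hr p ∧ nn r hr d = nn r hr p ∧ rk r hr d < rk r hr p ∧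
    ¬ CurveOver (lowF r hr d) (Csp r hr p) ∧ CurveOver (Fc r (rk r hr d)) (Csp r hr p)}

def ASet (p : Pt) : Set Pt :=
  {d | rk r hr d < rk r hr p ∧ ∃ u v s : ℝ, 0 < s ∧ Csp r hr p = circleS u v s ∧
    d 0 = 2*u - p 0 ∧ d 1 = 2*v - p 1}

def BSet (p : Pt) : Set Pt := ESet r hr p ∪ SSet r hr p ∪ ASet r hr p

theorem BSet_rank_lt {p d : Pt} (h : d ∈ BSet r hr p) : rk r hr d < rk r hr p := by
  rcases h with (h | h) | h
  · exact h.2.2.2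
  · exact h.2.2.1
  · exact h.1

theorem ESet_no4 {p dM d1 d2 d3 : Pt} (hM : dM ∈ ESet r hr p)
    (h1 : d1 ∈ ESet r hr p) (h2 : d2 ∈ ESet r hr p) (h3 : d3 ∈ ESet r hr p)
    (hr1 : rk r hr d1 < rk r hr dM) (hr2 : rk r hr d2 < rk r hr dM)
    (hr3 : rk r hr d3 < rk r hr dM)
    (h12 : d1 ≠ d2) (h13 : d1 ≠ d3) (h23 : d2 ≠ d3) : False := by
  have hSpec : Spec r hr p := by
    by_contra hn
    have hemp : Csp r hr p = ∅ := by rw [Csp, dif_neg hn]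
    have h := hM.1
    rw [hemp] at h
    exact absurd h (Set.notMem_empty dM)
  obtain ⟨hCov, -⟩ := Csp_spec r hr hSpec
  have hgood : GoodF (lowF r hr dM) := lowF_good r hr ⟨rk r hr d1, hr1⟩
  have hC : CurveOver (Set.univ : Set ℝ) (Csp r hr p) :=
    hCov.mono (fun x _ => Set.mem_univ x)
  have := three_point_curve hgood hC h12 h13 h23 h1.1 h2.1 h3.1
    (coords_lowF r hr hr1) (coords_lowF r hr hr2) (coords_lowF r hr hr3)
  exact hM.2.2.1 this

theorem ESet_finite (p : Pt) : (ESet r hr p).Finite := by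
  by_contra hinf
  have hinf' : (ESet r hr p).Infinite := hinf
  have e := hinf'.natEmbedding
  set d : ℕ → Pt := fun i => (e i : Pt) with hd
  have hmem : ∀ i, d i ∈ ESet r hr p := fun i => (e i).2
  have hdist : ∀ i j, i ≠ j → d i ≠ d j := by
    intro i j hij hEq
    exact hij (e.injective (Subtype.ext hEq))
  have hrkdist : ∀ i j, i ≠ j → rk r hr (d i) ≠ rk r hr (d j) := by
    intro i j hij hEq
    exact hdist i j hij (nn_inj r hr hEq (by rw [(hmem i).2.1, (hmem j).2.1]))
  obtain ⟨k, hk_mem, hk⟩ := Finset.exists_max_image (Finset.range 4)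
    (fun i => rk r hr (d i)) ⟨0, by simp⟩
  have hlt : ∀ m ∈ Finset.range 4, m ≠ k → rk r hr (d m) < rk r hr (d k) := by
    intro m hm hmk
    exact lt_of_le_of_ne (hk m hm) (hrkdist m k hmk)
  have hrange : ∀ (a : ℕ), a < 4 → a ∈ Finset.range 4 := by intro a ha; simpa using ha
  rw [Finset.mem_range] at hk_mem
  interval_cases k
  · exact ESet_no4 r hr (hmem 0) (hmem 1) (hmem 2) (hmem 3)
      (hlt 1 (by simp) (by norm_num)) (hlt 2 (by simp) (by norm_num))
      (hlt 3 (by simp) (by norm_num))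
      (hdist 1 2 (by norm_num)) (hdist 1 3 (by norm_num)) (hdist 2 3 (by norm_num))
  · exact ESet_no4 r hr (hmem 1) (hmem 0) (hmem 2) (hmem 3)
      (hlt 0 (by simp) (by norm_num)) (hlt 2 (by simp) (by norm_num))
      (hlt 3 (by simp) (by norm_num))
      (hdist 0 2 (by norm_num)) (hdist 0 3 (by norm_num)) (hdist 2 3 (by norm_num))
  · exact ESet_no4 r hr (hmem 2) (hmem 0) (hmem 1) (hmem 3)
      (hlt 0 (by simp) (by norm_num)) (hlt 1 (by simp) (by norm_num))
      (hlt 3 (by simp) (by norm_num))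
      (hdist 0 1 (by norm_num)) (hdist 0 3 (by norm_num)) (hdist 1 3 (by norm_num))
  · exact ESet_no4 r hr (hmem 3) (hmem 0) (hmem 1) (hmem 2)
      (hlt 0 (by simp) (by norm_num)) (hlt 1 (by simp) (by norm_num))
      (hlt 2 (by simp) (by norm_num))
      (hdist 0 1 (by norm_num)) (hdist 0 2 (by norm_num)) (hdist 1 2 (by norm_num))

theorem SSet_subsingleton (p : Pt) : (SSet r hr p).Subsingleton := by
  intro d hd d' hd'
  rcases lt_trichotomy (rk r hr d) (rk r hr d') with h | h | h
  · exact absurd ((hd.2.2.2.2).mono (Fc_subset_lowF r hr h)) hd'.2.2.2.1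
  · exact nn_inj r hr h (by rw [hd.2.1, hd'.2.1])
  · exact absurd ((hd'.2.2.2.2).mono (Fc_subset_lowF r hr h)) hd.2.2.2.1

theorem ASet_subsingleton (p : Pt) : (ASet r hr p).Subsingleton := by
  rintro d ⟨-, u, v, s, hs, hC, hd0, hd1⟩ d' ⟨-, u', v', s', hs', hC', hd0', hd1'⟩
  have := circleS_param_unique hs (hC.symm.trans hC')
  obtain ⟨rfl, rfl, rfl⟩ := this
  exact Pt.ext' (by rw [hd0, hd0']) (by rw [hd1, hd1'])

theorem BSet_finite (p : Pt) : (BSet r hr p).Finite :=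
  (((ESet_finite r hr p).union (SSet_subsingleton r hr p).finite).union
    (ASet_subsingleton r hr p).finite)

/-- The second colour component, by transfinite recursion on the level. -/
def lv : Pt → ℕ :=
  WellFounded.fix (InvImage.wf (rk r hr) wellFounded_lt)
    (fun p ih => sInf {m : ℕ | ∀ d (h : d ∈ BSet r hr p), ih d (BSet_rank_lt r hr h) ≠ m})

theorem lv_eq (p : Pt) :
    lv r hr p = sInf {m : ℕ | ∀ d ∈ BSet r hr p, lv r hr d ≠ m} := by
  rw [lv, WellFounded.fix_eq]

theorem lv_spec {p d : Pt} (hd : d ∈ BSet r hr p) : lv r hr d ≠ lv r hr p := by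
  intro hEq
  have hfin : ((lv r hr) '' (BSet r hr p)).Finite := (BSet_finite r hr p).image _
  have hne : {m : ℕ | ∀ d ∈ BSet r hr p, lv r hr d ≠ m}.Nonempty := by
    have : ((lv r hr) '' (BSet r hr p))ᶜ.Nonempty := by
      have := hfin.infinite_compl
      exact this.nonempty
    obtain ⟨m, hm⟩ := this
    refine ⟨m, fun d' hd' hEq' => hm ⟨d', hd', hEq'⟩⟩
  have hmem := Nat.sInf_mem hne
  rw [← lv_eq r hr p] at hmem
  exact hmem d hd hEq

end EK

theorem lineS_normals_parallel {a b c a' b' c' : ℝ} (hab : a ≠ 0 ∨ b ≠ 0)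
    (h : lineS a b c = lineS a' b' c') : a * b' - a' * b = 0 := by
  have hd : a^2 + b^2 ≠ 0 := by
    rcases hab with h' | h'
    · nlinarith [pow_two_pos_of_ne_zero h', sq_nonneg b]
    · nlinarith [pow_two_pos_of_ne_zero h', sq_nonneg a]
  have hp0 : mkPt (a*c/(a^2+b^2)) (b*c/(a^2+b^2)) ∈ lineS a b c := by
    rw [mem_lineS]; simp only [mkPt_zero, mkPt_one]; field_simp
  have hp1 : mkPt (a*c/(a^2+b^2) - b) (b*c/(a^2+b^2) + a) ∈ lineS a b c := by
    rw [mem_lineS]; simp only [mkPt_zero, mkPt_one]; field_simp; ring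
  rw [h] at hp0 hp1
  rw [mem_lineS] at hp0 hp1
  simp only [mkPt_zero, mkPt_one] at hp0 hp1
  linear_combination hp1 - hp0

theorem lineS_ne_circleS {a b c u v s : ℝ} (hab : a ≠ 0 ∨ b ≠ 0) (hs : 0 < s) :
    lineS a b c ≠ circleS u v s := by
  intro h
  have hsq : Real.sqrt s ^ 2 = s := Real.sq_sqrt hs.le
  have hpos : 0 < Real.sqrt s := Real.sqrt_pos.mpr hs
  have m1 : mkPt (u + Real.sqrt s) v ∈ circleS u v s := by
    rw [mem_circleS]; simp; exact hsq
  have m2 : mkPt (u - Real.sqrt s) v ∈ circleS u v s := by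
    rw [mem_circleS]; simp; linear_combination hsq
  have m3 : mkPt u (v + Real.sqrt s) ∈ circleS u v s := by
    rw [mem_circleS]; simp; exact hsq
  have l1 : mkPt (u + Real.sqrt s) v ∈ lineS a b c := by rw [h]; exact m1
  have l2 : mkPt (u - Real.sqrt s) v ∈ lineS a b c := by rw [h]; exact m2
  have l3 : mkPt u (v + Real.sqrt s) ∈ lineS a b c := by rw [h]; exact m3
  have d12 : mkPt (u + Real.sqrt s) v ≠ mkPt (u - Real.sqrt s) v := by
    intro hEq
    have : u + Real.sqrt s = u - Real.sqrt s := by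
      have := congrArg (fun q : Pt => q 0) hEq; simpa using this
    linarith
  have d13 : mkPt (u + Real.sqrt s) v ≠ mkPt u (v + Real.sqrt s) := by
    intro hEq
    have : u + Real.sqrt s = u := by
      have := congrArg (fun q : Pt => q 0) hEq; simpa using this
    linarith
  have d23 : mkPt (u - Real.sqrt s) v ≠ mkPt u (v + Real.sqrt s) := by
    intro hEq
    have : u - Real.sqrt s = u := by
      have := congrArg (fun q : Pt => q 0) hEq; simpa using this
    linarith
  exact LC_two hab l1 m1 l2 m2 l3 m3 d12 d13 d23

namespace EK

variable (r : W → ℝ) (hr : Function.Surjective r)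
include hr

theorem lowF_subset_Fc_rk (p : Pt) : lowF r hr p ⊆ Fc r (rk r hr p) := by
  intro x hx
  obtain ⟨γ, hγ, hx'⟩ := mem_lowF r hr |>.mp hx
  exact Fc_mono r hγ.le hx'

/-- Kill: the top-ranked point is the right-angle vertex `y` (Thales circle). -/
theorem killT {x y z : Pt} (hxz : x ≠ z)
    (hinner : (x 0 - y 0) * (z 0 - y 0) + (x 1 - y 1) * (z 1 - y 1) = 0)
    (h1 : rk r hr x < rk r hr z) (h2 : rk r hr z < rk r hr y)
    (hnzy : nn r hr z = nn r hr y) (hlxz : lv r hr x = lv r hr z)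
    (hlzy : lv r hr z = lv r hr y) : False := by
  set u0 : ℝ := (x 0 + z 0) / 2 with hu0d
  set v0 : ℝ := (x 1 + z 1) / 2 with hv0d
  set s : ℝ := ((x 0 - z 0)^2 + (x 1 - z 1)^2) / 4 with hsd
  have hcoordne : ¬ (x 0 = z 0 ∧ x 1 = z 1) := fun ⟨h0, h1⟩ => hxz (Pt.ext' h0 h1)
  have hs : 0 < s := by
    rw [hsd]
    rcases not_and_or.mp hcoordne with h | h
    · have := pow_two_pos_of_ne_zero (sub_ne_zero.mpr h)
      nlinarith [sq_nonneg (x 1 - z 1)]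
    · have := pow_two_pos_of_ne_zero (sub_ne_zero.mpr h)
      nlinarith [sq_nonneg (x 0 - z 0)]
  have hyC : y ∈ circleS u0 v0 s := by
    rw [mem_circleS, hu0d, hv0d, hsd]; linear_combination hinner
  have hxC : x ∈ circleS u0 v0 s := by
    rw [mem_circleS, hu0d, hv0d, hsd]; ring
  have hzC : z ∈ circleS u0 v0 s := by
    rw [mem_circleS, hu0d, hv0d, hsd]; ring
  have hF : GoodF (lowF r hr y) := lowF_good r hr ⟨rk r hr z, h2⟩
  have cx := coords_lowF r hr (h1.trans h2)
  have cz := coords_lowF r hr h2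
  have hu0 : u0 ∈ lowF r hr y := by
    rw [hu0d]; exact hF.div (hF.add cx.1 cz.1) hF.two
  have hv0 : v0 ∈ lowF r hr y := by
    rw [hv0d]; exact hF.div (hF.add cx.2 cz.2) hF.two
  have hsF : s ∈ lowF r hr y := by
    have h4 : s = ((x 0 - z 0)^2 + (x 1 - z 1)^2) / (2 * 2) := by rw [hsd]; norm_num
    rw [h4]
    exact hF.div (hF.add (hF.sq' (hF.sub cx.1 cz.1)) (hF.sq' (hF.sub cx.2 cz.2)))
      (hF.mul hF.two hF.two)
  have hCov : CurveOver (lowF r hr y) (circleS u0 v0 s) :=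
    Or.inr ⟨u0, v0, s, hs, hu0, hv0, hsF, rfl⟩
  have hCy : Csp r hr y = circleS u0 v0 s := Csp_eq r hr hCov hyC
  by_cases hzs : CurveOver (lowF r hr z) (circleS u0 v0 s)
  · have hCz : Csp r hr z = circleS u0 v0 s := Csp_eq r hr hzs hzC
    have hxA : x ∈ ASet r hr z := by
      refine ⟨h1, u0, v0, s, hs, hCz, ?_, ?_⟩
      · rw [hu0d]; ring
      · rw [hv0d]; ring
    exact lv_spec r hr (Or.inr hxA) hlxz
  · have hzE : z ∈ ESet r hr y := by
      refine ⟨?_, hnzy, ?_, h2⟩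
      · rw [hCy]; exact hzC
      · rw [hCy]; exact hzs
    exact lv_spec r hr (Or.inl (Or.inl hzE)) hlzy

/-- Kill: the top-ranked point is `x` (perpendicular line through `y`). -/
theorem killP {x y z : Pt} (hyz : y ≠ z)
    (hinner : (x 0 - y 0) * (z 0 - y 0) + (x 1 - y 1) * (z 1 - y 1) = 0)
    (h1 : rk r hr y < rk r hr x) (h2 : rk r hr z < rk r hr x) (h3 : rk r hr y ≠ rk r hr z)
    (hnyx : nn r hr y = nn r hr x) (hnyz : nn r hr y = nn r hr z)
    (hlyx : lv r hr y = lv r hr x) (hlyz : lv r hr y = lv r hr z) : False := by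
  set a : ℝ := z 0 - y 0 with had
  set b : ℝ := z 1 - y 1 with hbd
  have hab : a ≠ 0 ∨ b ≠ 0 := by
    by_contra hcon
    push_neg at hcon
    exact hyz (Pt.ext' (by have := hcon.1; rw [had] at this; linarith)
      (by have := hcon.2; rw [hbd] at this; linarith)).symm
  set C : Set Pt := lineS a b (a * y 0 + b * y 1) with hCd
  have hyC : y ∈ C := by rw [hCd, mem_lineS]
  have hxC : x ∈ C := by
    rw [hCd, mem_lineS, had, hbd]; linear_combination hinner
  have hzNotC : z ∉ C := by
    rw [hCd, mem_lineS]
    intro heq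
    have h0 : a^2 + b^2 = 0 := by rw [had, hbd]; linear_combination heq
    rcases hab with h' | h'
    · nlinarith [pow_two_pos_of_ne_zero h', sq_nonneg b]
    · nlinarith [pow_two_pos_of_ne_zero h', sq_nonneg a]
  have hF : GoodF (lowF r hr x) := lowF_good r hr ⟨rk r hr y, h1⟩
  have cy := coords_lowF r hr h1
  have cz := coords_lowF r hr h2
  have hCov : CurveOver (lowF r hr x) C := by
    rw [hCd]
    exact Or.inl ⟨a, b, a * y 0 + b * y 1, hab,
      (had ▸ hF.sub cz.1 cy.1), (hbd ▸ hF.sub cz.2 cy.2),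
      hF.add (hF.mul (had ▸ hF.sub cz.1 cy.1) cy.1) (hF.mul (hbd ▸ hF.sub cz.2 cy.2) cy.2), rfl⟩
  have hCx : Csp r hr x = C := Csp_eq r hr hCov hxC
  by_cases hyl : CurveOver (lowF r hr y) C
  · rcases hyl with ⟨a', b', c', hab', ha', hb', hc', hCeq⟩ | ⟨u, v, s, hs, -, -, -, hCeq⟩
    · -- C is a line over lowF y
      have hdet : a * b' - a' * b = 0 := by
        have := lineS_normals_parallel hab (hCd ▸ hCeq)
        exact this
      rcases h3.lt_or_gt with hyzr | hzyr
      · -- rk y < rk z : y is the S-partner of z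
        set M : Set Pt := lineS (-b') a' (-b' * y 0 + a' * y 1) with hMd
        have hyM : y ∈ M := by rw [hMd, mem_lineS]
        have hzM : z ∈ M := by
          rw [hMd, mem_lineS]
          have hza : z 0 = y 0 + a := by rw [had]; ring
          have hzb : z 1 = y 1 + b := by rw [hbd]; ring
          rw [hza, hzb]; linear_combination -hdet
        have hab'' : -b' ≠ 0 ∨ a' ≠ 0 := by
          rcases hab' with h' | h'
          · exact Or.inr h'
          · exact Or.inl (neg_ne_zero.mpr h')
        have hFy : GoodF (Fc r (rk r hr y)) := Fc_good r _
        have hsub : lowF r hr y ⊆ Fc r (rk r hr y) := lowF_subset_Fc_rk r hr y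
        have hyc := rk_mem r hr y
        have hMF : CurveOver (Fc r (rk r hr y)) M := by
          rw [hMd]
          exact Or.inl ⟨-b', a', -b' * y 0 + a' * y 1, hab'',
            hFy.neg (hsub hb'), hsub ha',
            hFy.add (hFy.mul (hFy.neg (hsub hb')) hyc.1) (hFy.mul (hsub ha') hyc.2), rfl⟩
        have hMneC : M ≠ C := fun h => hzNotC (h ▸ hzM)
        have hMnl : ¬ CurveOver (lowF r hr y) M := by
          intro hMl
          have hCovY : CurveOver (lowF r hr y) C :=
            Or.inl ⟨a', b', c', hab', ha', hb', hc', hCeq⟩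
          exact not_self_lowF r hr y
            (curve_unique (lowF_good_of_curve r hr hMl) hMl hCovY hMneC hyM hyC)
        have hMz : CurveOver (lowF r hr z) M := hMF.mono (Fc_subset_lowF r hr hyzr)
        have hCz : Csp r hr z = M := Csp_eq r hr hMz hzM
        have hySS : y ∈ SSet r hr z := by
          refine ⟨?_, hnyz, hyzr, ?_, ?_⟩
          · rw [hCz]; exact hyM
          · rw [hCz]; exact hMnl
          · rw [hCz]; exact hMF
        exact lv_spec r hr (Or.inl (Or.inr hySS)) hlyz
      · -- rk z < rk y : impossible configuration
        set M : Set Pt := lineS (-b') a' (-b' * z 0 + a' * z 1) with hMd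
        have hzM : z ∈ M := by rw [hMd, mem_lineS]
        have hyM : y ∈ M := by
          rw [hMd, mem_lineS]
          have hza : z 0 = y 0 + a := by rw [had]; ring
          have hzb : z 1 = y 1 + b := by rw [hbd]; ring
          rw [hza, hzb]; linear_combination hdet
        have hab'' : -b' ≠ 0 ∨ a' ≠ 0 := by
          rcases hab' with h' | h'
          · exact Or.inr h'
          · exact Or.inl (neg_ne_zero.mpr h')
        have hFy : GoodF (lowF r hr y) := lowF_good r hr ⟨rk r hr z, hzyr⟩
        have czy := coords_lowF r hr hzyr
        have hMl : CurveOver (lowF r hr y) M := by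
          rw [hMd]
          exact Or.inl ⟨-b', a', -b' * z 0 + a' * z 1, hab'',
            hFy.neg hb', ha',
            hFy.add (hFy.mul (hFy.neg hb') czy.1) (hFy.mul ha' czy.2), rfl⟩
        have hMneC : M ≠ C := fun h => hzNotC (h ▸ hzM)
        have hCovY : CurveOver (lowF r hr y) C :=
          Or.inl ⟨a', b', c', hab', ha', hb', hc', hCeq⟩
        exact not_self_lowF r hr y
          (curve_unique hFy hMl hCovY hMneC hyM hyC)
    · -- C would be both a line and a circle: impossible
      exact lineS_ne_circleS hab hs (hCd ▸ hCeq)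
  · have hyE : y ∈ ESet r hr x := by
      refine ⟨?_, hnyx, ?_, h1⟩
      · rw [hCx]; exact hyC
      · rw [hCx]; exact hyl
    exact lv_spec r hr (Or.inl (Or.inl hyE)) hlyx

end EK

namespace EK

variable (r : W → ℝ) (hr : Function.Surjective r)
include hr

theorem main {x y z : Pt} (hxy : x ≠ y) (hyz : y ≠ z) (hxz : x ≠ z)
    (hinner : (x 0 - y 0) * (z 0 - y 0) + (x 1 - y 1) * (z 1 - y 1) = 0)
    (hn1 : nn r hr x = nn r hr y) (hn2 : nn r hr y = nn r hr z)
    (hl1 : lv r hr x = lv r hr y) (hl2 : lv r hr y = lv r hr z) : False := by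
  have hinner' : (z 0 - y 0) * (x 0 - y 0) + (z 1 - y 1) * (x 1 - y 1) = 0 := by
    linear_combination hinner
  have rxy : rk r hr x ≠ rk r hr y := fun h => hxy (nn_inj r hr h hn1)
  have ryz : rk r hr y ≠ rk r hr z := fun h => hyz (nn_inj r hr h hn2)
  have rxz : rk r hr x ≠ rk r hr z := fun h => hxz (nn_inj r hr h (hn1.trans hn2))
  rcases rxy.lt_or_gt with hxy' | hyx'
  · rcases ryz.lt_or_gt with hyz' | hzy'
    · -- rk x < rk y < rk z : z is top
      exact killP r hr hxy.symm hinner' hyz' (hxy'.trans hyz') (Ne.symm rxy)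
        hn2 (hn1.symm) hl2 (hl1.symm)
    · -- rk x < rk y, rk z < rk y : y is top
      rcases rxz.lt_or_gt with hxz' | hzx'
      · exact killT r hr hxz hinner hxz' hzy' hn2.symm (hl1.trans hl2) hl2.symm
      · exact killT r hr hxz.symm (by linear_combination hinner) hzx' hxy'
          hn1 (hl1.trans hl2).symm hl1
  · rcases rxz.lt_or_gt with hxz' | hzx'
    · -- rk y < rk x < rk z : z is top
      exact killP r hr hxy.symm hinner' (hyx'.trans hxz') hxz' (Ne.symm rxy)
        hn2 (hn1.symm) hl2 (hl1.symm)
    · -- rk y < rk x, rk z < rk x : x is top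
      exact killP r hr hyz hinner hyx' hzx' ryz hn1.symm hn2 hl1.symm hl2

end EK

theorem stmt0 (hCH : CH) :
    ∃ f : Pt → ℕ, ∀ x y z : Pt, ¬ Collinear ℝ ({x, y, z} : Set Pt) →
      ∠ x y z = Real.pi / 2 → ¬ (f x = f y ∧ f y = f z) := by
  have hWR : #W = #ℝ := by
    rw [W_mk, Cardinal.mk_real, hCH]
  obtain ⟨e⟩ := Cardinal.eq.mp hWR
  set r : W → ℝ := ⇑e with hrd
  have hr : Function.Surjective r := e.surjective
  refine ⟨fun p => Nat.pair (EK.nn r hr p) (EK.lv r hr p), ?_⟩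
  intro x y z hnc hang ⟨hf1, hf2⟩
  have hn1 : EK.nn r hr x = EK.nn r hr y := (Nat.pair_eq_pair.mp hf1).1
  have hl1 : EK.lv r hr x = EK.lv r hr y := (Nat.pair_eq_pair.mp hf1).2
  have hn2 : EK.nn r hr y = EK.nn r hr z := (Nat.pair_eq_pair.mp hf2).1
  have hl2 : EK.lv r hr y = EK.lv r hr z := (Nat.pair_eq_pair.mp hf2).2
  have hxy : x ≠ y := by
    rintro rfl
    exact hnc (by rw [Set.insert_idem]; exact collinear_pair ℝ x z)
  have hyz : y ≠ z := by
    rintro rfl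
    exact hnc (by rw [Set.pair_eq_singleton]; exact collinear_pair ℝ x y)
  have hxz : x ≠ z := by
    rintro rfl
    exact hnc (by rw [Set.insert_comm, Set.pair_eq_singleton]; exact collinear_pair ℝ y x)
  have hinner : (x 0 - y 0) * (z 0 - y 0) + (x 1 - y 1) * (z 1 - y 1) = 0 := by
    rw [EuclideanGeometry.angle] at hang
    have h2 := (InnerProductGeometry.inner_eq_zero_iff_angle_eq_pi_div_two
      (x -ᵥ y) (z -ᵥ y)).mpr hang
    simp only [vsub_eq_sub] at h2
    simp only [PiLp.inner_apply, RCLike.inner_apply, conj_trivial, Fin.sum_univ_two] at h2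
    simp only [PiLp.sub_apply] at h2
    linarith [h2]
  exact EK.main r hr hxy hyz hxz hinner hn1 hn2 hl1 hl2
end
end

section
/- Let f : ℝ² → ℕ be a coloring and φ a function assigning to each line and each circle an infinite set of natural numbers, such that: (a) for every circle C, every color i ∈ φ(C), and points x, y ∈ C with f(x) = f(y) = i, the points x, y are not antipodal on C; and (b) for every circle C and color i ∉ φ(C), at most 2 points of C have color i. Then f admits no monochromatic right triangle. -/
open EuclideanGeometry Metric Real Set

noncomputable section

theorem stmt10 (f : Pt → ℕ) (φ : Set Pt → Set ℕ)
    (hinf : ∀ e : Set Pt, IsLine e ∨ IsCircle e → (φ e).Infinite)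
    (ha : ∀ (o : Pt) (r : ℝ), 0 < r → ∀ i ∈ φ (sphere o r),
      ∀ x ∈ sphere o r, ∀ y ∈ sphere o r, f x = i → f y = i → midpoint ℝ x y ≠ o)
    (hb : ∀ (o : Pt) (r : ℝ), 0 < r → ∀ i ∉ φ (sphere o r),
      {p ∈ (sphere o r : Set Pt) | f p = i}.encard ≤ 2) :
    ∀ x y z : Pt, ¬ Collinear ℝ ({x, y, z} : Set Pt) → ∠ x y z = Real.pi / 2 →
      ¬ (f x = f y ∧ f y = f z) := by
  intro x y z hcol hang ⟨hxy, hyz⟩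
  have hxz : x ≠ z := by
    rintro rfl
    exact hcol (Collinear.subset (by intro p hp; rcases hp with rfl | rfl | rfl <;> simp)
      (collinear_pair ℝ x y))
  set o : Pt := midpoint ℝ x z with ho
  set r : ℝ := dist x z / 2 with hr
  have hrpos : 0 < r := by
    have := dist_pos.2 hxz
    positivity
  have hx : x ∈ sphere o r := by
    rw [Metric.mem_sphere, ho, dist_left_midpoint (𝕜 := ℝ), hr]
    norm_num
    ring
  have hz : z ∈ sphere o r := by
    rw [Metric.mem_sphere, ho, dist_right_midpoint (𝕜 := ℝ), hr, dist_comm]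
    norm_num
    ring
  have hy : y ∈ sphere o r := by
    have hang' : InnerProductGeometry.angle (x - y) (z - y) = π / 2 := by
      simpa [EuclideanGeometry.angle, vsub_eq_sub] using hang
    have hnorm : ‖(x - y) + (z - y)‖ = ‖(x - y) - (z - y)‖ :=
      (InnerProductGeometry.norm_add_eq_norm_sub_iff_angle_eq_pi_div_two _ _).2 hang'
    have hdy : dist y o = ‖(x - y) + (z - y)‖ / 2 := by
      rw [dist_eq_norm,
        show y - o = (-(2:ℝ)⁻¹) • ((x - y) + (z - y)) by
          have : o = (2:ℝ)⁻¹ • x + (2:ℝ)⁻¹ • z := by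
            rw [ho, midpoint_eq_smul_add]; norm_num
          rw [this]; module,
        norm_smul, show ‖-(2:ℝ)⁻¹‖ = 1/2 by norm_num]
      ring
    rw [Metric.mem_sphere, hdy, hnorm, hr, dist_eq_norm,
      show x - z = (x - y) - (z - y) by abel]
  by_cases hmem : f y ∈ φ (sphere o r)
  · exact ha o r hrpos (f y) hmem x hx z hz hxy (hyz ▸ rfl) rfl
  · have hsub : ({x, y, z} : Set Pt) ⊆ {p ∈ (sphere o r : Set Pt) | f p = f y} := by
      rintro p (rfl | rfl | rfl)
      exacts [⟨hx, hxy⟩, ⟨hy, rfl⟩, ⟨hz, hyz.symm⟩]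
    have hxyne : x ≠ y := by
      rintro rfl
      exact hcol (Collinear.subset (by intro p hp; rcases hp with rfl | rfl | rfl <;> simp)
        (collinear_pair ℝ x z))
    have hyzne : y ≠ z := by
      rintro rfl
      exact hcol (Collinear.subset (by intro p hp; rcases hp with rfl | rfl | rfl <;> simp)
        (collinear_pair ℝ x y))
    have h3 : ({x, y, z} : Set Pt).encard = 3 := by
      rw [Set.encard_insert_of_notMem (by simp [hxyne, hxz]), Set.encard_pair hyzne]
      rfl
    have hle := (Set.encard_le_encard hsub).trans (hb o r hrpos (f y) hmem)
    rw [h3] at hle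
    exact absurd hle (by decide)
end
end
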